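/- For k = 4 and all integers n, s with 4n/11 ≤ s ≤ 3n/8, the canonical blow-up G(n;4,s) of Γ_4 (replacing vertices 1, 4, 8 of Γ_4 by independent sets of size 3n - 8s and the other eight vertices by independent sets of size 3s - n) is triangle-free, has n vertices, independence number exactly s, and exactly 6n² - 32ns + 44s² edges; consequently ex(n,s) ≥ 6n² - 32ns + 44s². -/

import Mathlib

open SimpleGraph

/-- An independent set in a graph, as a finset. -/
def IsIndep {V : Type*} (G : SimpleGraph V) (t : Finset V) : Prop :=
  ∀ x ∈ t, ∀ y ∈ t, x ≠ y → ¬ G.Adj x y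

open scoped Classical in
/-- `ex n s`: the maximum number of edges of a triangle-free graph on `n`
vertices whose independence number is at most `s`. -/
noncomputable def exRT (n s : ℕ) : ℕ :=
  sSup {m | ∃ G : SimpleGraph (Fin n), G.CliqueFree 3 ∧
    (∀ t : Finset (Fin n), IsIndep G t → t.card ≤ s) ∧ G.edgeFinset.card = m}

/-- The Andrásfai graph `Γ_k`: the Cayley graph on `ZMod (3k-1)` with connection
set `{k, k+1, ..., 2k-1}`; `Γ_4` lives on `ZMod 11` with connection set
`{4,5,6,7}`. -/
def andrasfai (k : ℕ) : SimpleGraph (ZMod (3 * k - 1)) :=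
  SimpleGraph.fromRel
    (fun i j => ∃ d : ℕ, k ≤ d ∧ d ≤ 2 * k - 1 ∧ i - j = (d : ZMod (3 * k - 1)))

/-- Class sizes for `G(n;4,s)`: the vertices `1`, `4`, `8` of `Γ_4` get classes
of size `3n - 8s`, the other eight vertices get classes of size `3s - n`. -/
def csize (k n s : ℕ) (i : ZMod (3 * k - 1)) : ℕ :=
  if i = 1 ∨ i = (k : ZMod (3 * k - 1)) ∨ i = (2 * k : ZMod (3 * k - 1)) then
    (k - 1) * n - (3 * k - 4) * s
  else 3 * s - n

/-- The canonical blow-up `G(n;k,s)` of `Γ_k`. -/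
def canonical (k n s : ℕ) :
    SimpleGraph (Σ i : ZMod (3 * k - 1), Fin (csize k n s i)) :=
  (andrasfai k).comap Sigma.fst

/-! ### Auxiliary lemmas -/

open Finset

lemma adj_iff (i j : ZMod (3 * 4 - 1)) :
    (andrasfai 4).Adj i j ↔ (i - j = 4 ∨ i - j = 5 ∨ i - j = 6 ∨ i - j = 7) := by
  constructor
  · rintro ⟨hne, (⟨d, hd1, hd2, hd⟩ | ⟨d, hd1, hd2, hd⟩)⟩
    · interval_cases d <;> simp_all
    · have h : i - j = -(d : ZMod (3*4-1)) := by rw [← hd]; ring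
      interval_cases d <;> rw [h] <;> decide
  · intro h
    refine ⟨?_, Or.inl ?_⟩
    · rcases h with h|h|h|h <;>
        (intro he; rw [he, sub_self] at h; exact absurd h (by decide))
    · rcases h with h|h|h|h
      exacts [⟨4, by norm_num, by norm_num, by rw [h]; decide⟩,
        ⟨5, by norm_num, by norm_num, by rw [h]; decide⟩,
        ⟨6, by norm_num, by norm_num, by rw [h]; decide⟩,
        ⟨7, by norm_num, by norm_num, by rw [h]; decide⟩]

instance andrasfaiDec : DecidableRel (andrasfai 4).Adj :=
  fun i j => decidable_of_iff' _ (adj_iff i j)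

instance canonDec (n s : ℕ) : DecidableRel (canonical 4 n s).Adj :=
  fun v w => (andrasfaiDec v.1 w.1 : Decidable ((andrasfai 4).Adj v.1 w.1))

lemma no_triangle : ∀ x y z : ZMod (3*4-1),
    ¬((andrasfai 4).Adj x y ∧ (andrasfai 4).Adj y z ∧ (andrasfai 4).Adj x z) := by decide

set_option synthInstance.maxSize 2000 in
lemma no_four : ∀ a b c d : ZMod (3*4-1),
    (a ≠ 1 ∧ a ≠ 4 ∧ a ≠ 8) → (b ≠ 1 ∧ b ≠ 4 ∧ b ≠ 8) → (c ≠ 1 ∧ c ≠ 4 ∧ c ≠ 8) →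
    (d ≠ 1 ∧ d ≠ 4 ∧ d ≠ 8) →
    a ≠ b → a ≠ c → a ≠ d → b ≠ c → b ≠ d → c ≠ d →
    ((andrasfai 4).Adj a b ∨ (andrasfai 4).Adj a c ∨ (andrasfai 4).Adj a d ∨
     (andrasfai 4).Adj b c ∨ (andrasfai 4).Adj b d ∨ (andrasfai 4).Adj c d) := by decide

lemma near14 : ∀ x : ZMod (3*4-1), x = 1 ∨ x = 2 ∨ x = 3 ∨ x = 4 ∨
    (andrasfai 4).Adj x 1 ∨ (andrasfai 4).Adj x 4 := by decide

lemma cond_iff : ∀ i : ZMod (3*4-1),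
    (i = 1 ∨ i = ((4 : ℕ) : ZMod (3*4-1)) ∨ i = 2 * ((4 : ℕ) : ZMod (3*4-1))) ↔
      (i = 1 ∨ i = 4 ∨ i = 8) := by decide

lemma csize_eq (n s : ℕ) (i : ZMod (3*4-1)) :
    csize 4 n s i = if i = 1 ∨ i = 4 ∨ i = 8 then 3*n - 8*s else 3*s - n := by
  by_cases h : i = 1 ∨ i = 4 ∨ i = 8
  · rw [csize, if_pos ((cond_iff i).mpr h), if_pos h]
  · rw [csize, if_neg (fun hh => h ((cond_iff i).mp hh)), if_neg h]

lemma sum_zmod (f : ZMod (3*4-1) → ℕ) :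
    ∑ i, f i = f 0 + f 1 + f 2 + f 3 + f 4 + f 5 + f 6 + f 7 + f 8 + f 9 + f 10 := by
  rw [show (univ : Finset (ZMod (3*4-1))) = {0,1,2,3,4,5,6,7,8,9,10} from by decide]
  rw [Finset.sum_insert (by decide), Finset.sum_insert (by decide),
    Finset.sum_insert (by decide), Finset.sum_insert (by decide),
    Finset.sum_insert (by decide), Finset.sum_insert (by decide),
    Finset.sum_insert (by decide), Finset.sum_insert (by decide),
    Finset.sum_insert (by decide), Finset.sum_insert (by decide), Finset.sum_singleton]
  ring

lemma sum4 (f : ZMod (3*4-1) → ℕ) (a b c d : ZMod (3*4-1))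
    (h1 : a ∉ ({b,c,d} : Finset (ZMod (3*4-1))))
    (h2 : b ∉ ({c,d} : Finset (ZMod (3*4-1)))) (h3 : c ≠ d) :
    ∑ x ∈ ({a,b,c,d} : Finset (ZMod (3*4-1))), f x = f a + f b + f c + f d := by
  rw [Finset.sum_insert h1, Finset.sum_insert h2, Finset.sum_pair h3]; ring

lemma nbr0 : univ.filter (fun j => (andrasfai 4).Adj 0 j) = ({4,5,6,7} : Finset (ZMod (3*4-1))) := by decide
lemma nbr1 : univ.filter (fun j => (andrasfai 4).Adj 1 j) = ({5,6,7,8} : Finset (ZMod (3*4-1))) := by decide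
lemma nbr2 : univ.filter (fun j => (andrasfai 4).Adj 2 j) = ({6,7,8,9} : Finset (ZMod (3*4-1))) := by decide
lemma nbr3 : univ.filter (fun j => (andrasfai 4).Adj 3 j) = ({7,8,9,10} : Finset (ZMod (3*4-1))) := by decide
lemma nbr4 : univ.filter (fun j => (andrasfai 4).Adj 4 j) = ({8,9,10,0} : Finset (ZMod (3*4-1))) := by decide
lemma nbr5 : univ.filter (fun j => (andrasfai 4).Adj 5 j) = ({9,10,0,1} : Finset (ZMod (3*4-1))) := by decide
lemma nbr6 : univ.filter (fun j => (andrasfai 4).Adj 6 j) = ({10,0,1,2} : Finset (ZMod (3*4-1))) := by decide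
lemma nbr7 : univ.filter (fun j => (andrasfai 4).Adj 7 j) = ({0,1,2,3} : Finset (ZMod (3*4-1))) := by decide
lemma nbr8 : univ.filter (fun j => (andrasfai 4).Adj 8 j) = ({1,2,3,4} : Finset (ZMod (3*4-1))) := by decide
lemma nbr9 : univ.filter (fun j => (andrasfai 4).Adj 9 j) = ({2,3,4,5} : Finset (ZMod (3*4-1))) := by decide
lemma nbr10 : univ.filter (fun j => (andrasfai 4).Adj 10 j) = ({3,4,5,6} : Finset (ZMod (3*4-1))) := by decide

lemma exists_four {α : Type*} [DecidableEq α] {s : Finset α} (h : 4 ≤ s.card) :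
    ∃ a ∈ s, ∃ b ∈ s, ∃ c ∈ s, ∃ d ∈ s,
      a ≠ b ∧ a ≠ c ∧ a ≠ d ∧ b ≠ c ∧ b ≠ d ∧ c ≠ d := by
  obtain ⟨a, ha⟩ := Finset.card_pos.mp (show 0 < s.card by omega)
  have h1 : 3 ≤ (s.erase a).card := by rw [Finset.card_erase_of_mem ha]; omega
  obtain ⟨b, hb⟩ := Finset.card_pos.mp (show 0 < (s.erase a).card by omega)
  have h2 : 2 ≤ ((s.erase a).erase b).card := by rw [Finset.card_erase_of_mem hb]; omega
  obtain ⟨c, hc⟩ := Finset.card_pos.mp (show 0 < ((s.erase a).erase b).card by omega)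
  have h3 : 1 ≤ (((s.erase a).erase b).erase c).card := by
    rw [Finset.card_erase_of_mem hc]; omega
  obtain ⟨d, hd⟩ := Finset.card_pos.mp (show 0 < (((s.erase a).erase b).erase c).card by omega)
  refine ⟨a, ha, b, Finset.mem_of_mem_erase hb,
    c, Finset.mem_of_mem_erase (Finset.mem_of_mem_erase hc),
    d, Finset.mem_of_mem_erase (Finset.mem_of_mem_erase (Finset.mem_of_mem_erase hd)),
    ?_, ?_, ?_, ?_, ?_, ?_⟩
  · exact (Finset.ne_of_mem_erase hb).symm
  · exact (Finset.ne_of_mem_erase (Finset.mem_of_mem_erase hc)).symm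
  · exact (Finset.ne_of_mem_erase
      (Finset.mem_of_mem_erase (Finset.mem_of_mem_erase hd))).symm
  · exact (Finset.ne_of_mem_erase hc).symm
  · exact (Finset.ne_of_mem_erase (Finset.mem_of_mem_erase hd)).symm
  · exact (Finset.ne_of_mem_erase hd).symm

/-- The key independence bound. -/
lemma indep_sum_le (n s : ℕ) (h1 : 4 * n ≤ 11 * s) (h2 : 8 * s ≤ 3 * n)
    (J : Finset (ZMod (3*4-1)))
    (hJ : ∀ i ∈ J, ∀ j ∈ J, ¬ (andrasfai 4).Adj i j) :
    ∑ i ∈ J, csize 4 n s i ≤ s := by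
  by_cases h14 : (1 : ZMod (3*4-1)) ∈ J ∧ (4 : ZMod (3*4-1)) ∈ J
  · have hsub : J ⊆ ({1,2,3,4} : Finset (ZMod (3*4-1))) := by
      intro x hx
      rcases near14 x with h|h|h|h|h|h
      · simp [h]
      · simp [h]
      · simp [h]
      · simp [h]
      · exact absurd h (hJ x hx 1 h14.1)
      · exact absurd h (hJ x hx 4 h14.2)
    calc ∑ i ∈ J, csize 4 n s i
        ≤ ∑ i ∈ ({1,2,3,4} : Finset (ZMod (3*4-1))), csize 4 n s i :=
          Finset.sum_le_sum_of_subset hsub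
      _ = csize 4 n s 1 + csize 4 n s 2 + csize 4 n s 3 + csize 4 n s 4 :=
          sum4 _ _ _ _ _ (by decide) (by decide) (by decide)
      _ ≤ s := by
          rw [csize_eq, csize_eq, csize_eq, csize_eq,
            if_pos (by decide), if_neg (by decide), if_neg (by decide), if_pos (by decide)]
          omega
  · -- heavy part has at most one element
    set P : ZMod (3*4-1) → Prop := fun i => i = 1 ∨ i = 4 ∨ i = 8 with hP
    have hone : (J.filter P).card ≤ 1 := by
      rw [Finset.card_le_one]
      intro x hx y hy
      simp only [Finset.mem_filter, hP] at hx hy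
      have h18 : ¬((1 : ZMod (3*4-1)) ∈ J ∧ (8 : ZMod (3*4-1)) ∈ J) := by
        rintro ⟨ha, hb⟩; exact hJ 1 ha 8 hb (by decide)
      have h48 : ¬((4 : ZMod (3*4-1)) ∈ J ∧ (8 : ZMod (3*4-1)) ∈ J) := by
        rintro ⟨ha, hb⟩; exact hJ 4 ha 8 hb (by decide)
      obtain ⟨hx1, hx2⟩ := hx
      obtain ⟨hy1, hy2⟩ := hy
      rcases hx2 with rfl|rfl|rfl <;> rcases hy2 with rfl|rfl|rfl
      · rfl
      · exact absurd ⟨hx1, hy1⟩ h14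
      · exact absurd ⟨hx1, hy1⟩ h18
      · exact absurd ⟨hy1, hx1⟩ h14
      · rfl
      · exact absurd ⟨hx1, hy1⟩ h48
      · exact absurd ⟨hy1, hx1⟩ h18
      · exact absurd ⟨hy1, hx1⟩ h48
      · rfl
    have hthree : (J.filter (fun i => ¬ P i)).card ≤ 3 := by
      by_contra hbc
      push_neg at hbc
      obtain ⟨a, ha, b, hb, c, hc, d, hd, hab, hac, had, hbc', hbd, hcd⟩ :=
        exists_four (show 4 ≤ (J.filter (fun i => ¬ P i)).card by omega)
      simp only [Finset.mem_filter, hP, not_or] at ha hb hc hd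
      rcases no_four a b c d ⟨ha.2.1, ha.2.2⟩ ⟨hb.2.1, hb.2.2⟩ ⟨hc.2.1, hc.2.2⟩
          ⟨hd.2.1, hd.2.2⟩ hab hac had hbc' hbd hcd with h|h|h|h|h|h
      · exact hJ a ha.1 b hb.1 h
      · exact hJ a ha.1 c hc.1 h
      · exact hJ a ha.1 d hd.1 h
      · exact hJ b hb.1 c hc.1 h
      · exact hJ b hb.1 d hd.1 h
      · exact hJ c hc.1 d hd.1 h
    have hsplit : ∑ i ∈ J, csize 4 n s i =
        ∑ i ∈ J.filter P, csize 4 n s i + ∑ i ∈ J.filter (fun i => ¬ P i), csize 4 n s i :=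
      (Finset.sum_filter_add_sum_filter_not J P _).symm
    have hA : ∑ i ∈ J.filter P, csize 4 n s i = (J.filter P).card * (3*n - 8*s) := by
      rw [Finset.sum_congr rfl (fun i hi => ?_), Finset.sum_const, smul_eq_mul]
      rw [csize_eq, if_pos (Finset.mem_filter.mp hi).2]
    have hB : ∑ i ∈ J.filter (fun i => ¬ P i), csize 4 n s i =
        (J.filter (fun i => ¬ P i)).card * (3*s - n) := by
      rw [Finset.sum_congr rfl (fun i hi => ?_), Finset.sum_const, smul_eq_mul]
      rw [csize_eq, if_neg (Finset.mem_filter.mp hi).2]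
    rw [hsplit, hA, hB]
    have e1 : (J.filter P).card * (3*n - 8*s) ≤ 1 * (3*n - 8*s) :=
      Nat.mul_le_mul_right _ hone
    have e2 : (J.filter (fun i => ¬ P i)).card * (3*s - n) ≤ 3 * (3*s - n) :=
      Nat.mul_le_mul_right _ hthree
    omega

/-- Any independent set of the blow-up projects to an independent set of `Γ₄`. -/
lemma indep_bound (n s : ℕ) (h1 : 4 * n ≤ 11 * s) (h2 : 8 * s ≤ 3 * n)
    (t : Finset (Σ i : ZMod (3*4-1), Fin (csize 4 n s i)))
    (ht : IsIndep (canonical 4 n s) t) : t.card ≤ s := by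
  classical
  set J := t.image Sigma.fst with hJdef
  have hJ : ∀ i ∈ J, ∀ j ∈ J, ¬ (andrasfai 4).Adj i j := by
    intro i hi j hj hadj
    obtain ⟨v, hv, rfl⟩ := Finset.mem_image.mp hi
    obtain ⟨w, hw, rfl⟩ := Finset.mem_image.mp hj
    have hvw : v ≠ w := by
      rintro rfl
      exact (andrasfai 4).irrefl hadj
    exact ht v hv w hw hvw hadj
  have hsub : t ⊆ J.sigma (fun i => (univ : Finset (Fin (csize 4 n s i)))) := by
    intro v hv
    exact Finset.mem_sigma.mpr ⟨Finset.mem_image_of_mem _ hv, Finset.mem_univ _⟩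
  calc t.card ≤ (J.sigma (fun i => (univ : Finset (Fin (csize 4 n s i))))).card :=
        Finset.card_le_card hsub
    _ = ∑ i ∈ J, csize 4 n s i := by
        rw [Finset.card_sigma]
        exact Finset.sum_congr rfl (fun i _ => by simp)
    _ ≤ s := indep_sum_le n s h1 h2 J hJ


lemma csv0 (n s : ℕ) : csize 4 n s 0 = 3*s - n := by rw [csize_eq, if_neg (by decide)]
lemma csv1 (n s : ℕ) : csize 4 n s 1 = 3*n - 8*s := by rw [csize_eq, if_pos (by decide)]
lemma csv2 (n s : ℕ) : csize 4 n s 2 = 3*s - n := by rw [csize_eq, if_neg (by decide)]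
lemma csv3 (n s : ℕ) : csize 4 n s 3 = 3*s - n := by rw [csize_eq, if_neg (by decide)]
lemma csv4 (n s : ℕ) : csize 4 n s 4 = 3*n - 8*s := by rw [csize_eq, if_pos (by decide)]
lemma csv5 (n s : ℕ) : csize 4 n s 5 = 3*s - n := by rw [csize_eq, if_neg (by decide)]
lemma csv6 (n s : ℕ) : csize 4 n s 6 = 3*s - n := by rw [csize_eq, if_neg (by decide)]
lemma csv7 (n s : ℕ) : csize 4 n s 7 = 3*s - n := by rw [csize_eq, if_neg (by decide)]
lemma csv8 (n s : ℕ) : csize 4 n s 8 = 3*n - 8*s := by rw [csize_eq, if_pos (by decide)]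
lemma csv9 (n s : ℕ) : csize 4 n s 9 = 3*s - n := by rw [csize_eq, if_neg (by decide)]
lemma csv10 (n s : ℕ) : csize 4 n s 10 = 3*s - n := by rw [csize_eq, if_neg (by decide)]

lemma indep0123 : ∀ i ∈ ({0,1,2,3} : Finset (ZMod (3*4-1))),
    ∀ j ∈ ({0,1,2,3} : Finset (ZMod (3*4-1))), ¬ (andrasfai 4).Adj i j := by decide

lemma canon_cliqueFree (n s : ℕ) : (canonical 4 n s).CliqueFree 3 := by
  intro t ht
  obtain ⟨hcl, hcard⟩ := ht
  obtain ⟨a, b, c, hab, hac, hbc, rfl⟩ := Finset.card_eq_three.mp hcard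
  have ha1 : (canonical 4 n s).Adj a b := hcl (by simp) (by simp) hab
  have ha2 : (canonical 4 n s).Adj b c := hcl (by simp) (by simp) hbc
  have ha3 : (canonical 4 n s).Adj a c := hcl (by simp) (by simp) hac
  exact no_triangle a.1 b.1 c.1 ⟨ha1, ha2, ha3⟩

lemma edgeCard_irrel {V : Type*} (G : SimpleGraph V) (F₁ F₂ : Fintype G.edgeSet) :
    (@SimpleGraph.edgeFinset _ G F₁).card = (@SimpleGraph.edgeFinset _ G F₂).card := by
  cases Subsingleton.elim F₁ F₂
  rfl

lemma card_V (n s : ℕ) (h1 : 4 * n ≤ 11 * s) (h2 : 8 * s ≤ 3 * n) :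
    Fintype.card (Σ i : ZMod (3 * 4 - 1), Fin (csize 4 n s i)) = n := by
  rw [Fintype.card_sigma]
  simp only [Fintype.card_fin]
  rw [sum_zmod, csv0, csv1, csv2, csv3, csv4, csv5, csv6, csv7, csv8, csv9, csv10]
  omega

/-- Edge count of the blow-up, for an arbitrary `Fintype` instance. -/
lemma twoE (n s : ℕ) (h1 : 4 * n ≤ 11 * s) (h2 : 8 * s ≤ 3 * n)
    (F : Fintype ((canonical 4 n s).edgeSet)) :
    (2 * (@SimpleGraph.edgeFinset _ (canonical 4 n s) F).card : ℤ) =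
      2 * (6 * n ^ 2 - 32 * n * s + 44 * s ^ 2) := by
  classical
  have key : ∀ (F₁ F₂ : Fintype ((canonical 4 n s).edgeSet)),
      (@SimpleGraph.edgeFinset _ _ F₁).card = (@SimpleGraph.edgeFinset _ _ F₂).card := by
    intro F₁ F₂
    cases Subsingleton.elim F₁ F₂
    rfl
  have hdeg : ∀ (i : ZMod (3*4-1)) (x : Fin (csize 4 n s i)),
      (canonical 4 n s).degree ⟨i, x⟩ = ∑ j ∈ univ.filter (fun j => (andrasfai 4).Adj i j), csize 4 n s j := by
    intro i x
    have hnb : (canonical 4 n s).neighborFinset ⟨i, x⟩ =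
        (univ.filter (fun j => (andrasfai 4).Adj i j)).sigma
          (fun j => (univ : Finset (Fin (csize 4 n s j)))) := by
      ext w
      simp only [SimpleGraph.mem_neighborFinset, Finset.mem_sigma, Finset.mem_filter,
        Finset.mem_univ, true_and, and_true]
      exact Iff.rfl
    rw [SimpleGraph.degree, hnb, Finset.card_sigma]
    exact Finset.sum_congr rfl (fun j _ => by simp)
  have hsum := SimpleGraph.sum_degrees_eq_twice_card_edges (canonical 4 n s)
  rw [← Finset.univ_sigma_univ, Finset.sum_sigma] at hsum
  have hsum2 : ∑ i : ZMod (3*4-1), (csize 4 n s i) *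
      (∑ j ∈ univ.filter (fun j => (andrasfai 4).Adj i j), csize 4 n s j) =
      2 * (@SimpleGraph.edgeFinset _ (canonical 4 n s) (canonical 4 n s).fintypeEdgeSet).card := by
    rw [← hsum]
    refine Finset.sum_congr rfl (fun i _ => ?_)
    rw [Finset.sum_congr rfl (fun x _ => hdeg i x), Finset.sum_const, smul_eq_mul,
      Finset.card_univ, Fintype.card_fin]
  rw [sum_zmod] at hsum2
  rw [nbr0, nbr1, nbr2, nbr3, nbr4, nbr5, nbr6, nbr7, nbr8, nbr9, nbr10] at hsum2
  rw [sum4 _ _ _ _ _ (by decide) (by decide) (by decide),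
    sum4 _ _ _ _ _ (by decide) (by decide) (by decide),
    sum4 _ _ _ _ _ (by decide) (by decide) (by decide),
    sum4 _ _ _ _ _ (by decide) (by decide) (by decide),
    sum4 _ _ _ _ _ (by decide) (by decide) (by decide),
    sum4 _ _ _ _ _ (by decide) (by decide) (by decide),
    sum4 _ _ _ _ _ (by decide) (by decide) (by decide),
    sum4 _ _ _ _ _ (by decide) (by decide) (by decide),
    sum4 _ _ _ _ _ (by decide) (by decide) (by decide),
    sum4 _ _ _ _ _ (by decide) (by decide) (by decide),
    sum4 _ _ _ _ _ (by decide) (by decide) (by decide)] at hsum2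
  rw [csv0, csv1, csv2, csv3, csv4, csv5, csv6, csv7, csv8, csv9, csv10] at hsum2
  have h5 : 2 * (@SimpleGraph.edgeFinset _ (canonical 4 n s) F).card =
      4*(3*n-8*s)^2 + 16*(3*n-8*s)*(3*s-n) + 24*(3*s-n)^2 := by
    rw [key F (canonical 4 n s).fintypeEdgeSet, ← hsum2]
    ring
  have hXI : ((3*n - 8*s : ℕ) : ℤ) = 3*(n:ℤ) - 8*(s:ℤ) := by omega
  have hYI : ((3*s - n : ℕ) : ℤ) = 3*(s:ℤ) - (n:ℤ) := by omega
  calc (2 * (@SimpleGraph.edgeFinset _ (canonical 4 n s) F).card : ℤ)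
      = ((2 * (@SimpleGraph.edgeFinset _ (canonical 4 n s) F).card : ℕ) : ℤ) := by
        push_cast; ring
    _ = ((4*(3*n-8*s)^2 + 16*(3*n-8*s)*(3*s-n) + 24*(3*s-n)^2 : ℕ) : ℤ) := by rw [h5]
    _ = 4*((3*n-8*s : ℕ) : ℤ)^2 + 16*((3*n-8*s : ℕ) : ℤ)*((3*s-n : ℕ) : ℤ)
          + 24*((3*s-n : ℕ) : ℤ)^2 := by push_cast; ring
    _ = 2 * (6 * n ^ 2 - 32 * n * s + 44 * s ^ 2) := by rw [hXI, hYI]; ring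

/-- for `4n/11 ≤ s ≤ 3n/8` the canonical blow-up `G(n;4,s)` is
triangle-free, has `n` vertices, independence number exactly `s`, and exactly
`6n² - 32ns + 44s²` edges; consequently `ex(n,s) ≥ 6n² - 32ns + 44s²`. -/
theorem stmt_12 (n s : ℕ) (h1 : 4 * n ≤ 11 * s) (h2 : 8 * s ≤ 3 * n) :
    haveI : NeZero (3 * 4 - 1) := ⟨by omega⟩
    haveI : DecidableRel (canonical 4 n s).Adj := Classical.decRel _
    (canonical 4 n s).CliqueFree 3 ∧
      Fintype.card (Σ i : ZMod (3 * 4 - 1), Fin (csize 4 n s i)) = n ∧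
      (∃ t, IsIndep (canonical 4 n s) t ∧ t.card = s) ∧
      (∀ t, IsIndep (canonical 4 n s) t → t.card ≤ s) ∧
      (2 * (canonical 4 n s).edgeFinset.card : ℤ) =
        2 * (6 * n ^ 2 - 32 * n * s + 44 * s ^ 2) ∧
      (6 * n ^ 2 - 32 * n * s + 44 * s ^ 2 : ℤ) ≤ exRT n s := by
  refine ⟨canon_cliqueFree n s, card_V n s h1 h2, ?_, ?_, twoE n s h1 h2 _, ?_⟩
  · -- a maximum independent set
    refine ⟨({0,1,2,3} : Finset (ZMod (3*4-1))).sigma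
      (fun i => (Finset.univ : Finset (Fin (csize 4 n s i)))), ?_, ?_⟩
    · intro x hx y hy hne hadj
      exact indep0123 x.1 (Finset.mem_sigma.mp hx).1 y.1 (Finset.mem_sigma.mp hy).1 hadj
    · rw [Finset.card_sigma]
      simp only [Finset.card_univ, Fintype.card_fin]
      rw [sum4 _ 0 1 2 3 (by decide) (by decide) (by decide), csv0, csv1, csv2, csv3]
      omega
  · exact fun t ht => indep_bound n s h1 h2 t ht
  · -- the extremal-number bound
    classical
    have hcV : Fintype.card (Σ i : ZMod (3 * 4 - 1), Fin (csize 4 n s i)) = n :=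
      card_V n s h1 h2
    let E := Fintype.equivFinOfCardEq hcV
    let G' : SimpleGraph (Fin n) := (canonical 4 n s).comap E.symm.toEmbedding
    have φ : G' ≃g (canonical 4 n s) := SimpleGraph.Iso.comap E.symm (canonical 4 n s)
    have hcf : G'.CliqueFree 3 :=
      SimpleGraph.CliqueFree.comap φ.toEmbedding.isContained (canon_cliqueFree n s)
    have hind : ∀ t : Finset (Fin n), IsIndep G' t → t.card ≤ s := by
      intro t ht
      have himg : IsIndep (canonical 4 n s) (t.image (E.symm : Fin n → _)) := by
        intro x hx y hy hne hadj
        obtain ⟨u, hu, rfl⟩ := Finset.mem_image.mp hx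
        obtain ⟨v, hv, rfl⟩ := Finset.mem_image.mp hy
        have huv : u ≠ v := fun h => hne (by rw [h])
        exact ht u hu v hv huv hadj
      have hb := indep_bound n s h1 h2 _ himg
      rwa [Finset.card_image_of_injective _ (E.symm.injective)] at hb
    have hmem : (canonical 4 n s).edgeFinset.card ∈
        {m | ∃ G : SimpleGraph (Fin n), G.CliqueFree 3 ∧
          (∀ t : Finset (Fin n), IsIndep G t → t.card ≤ s) ∧ G.edgeFinset.card = m} := by
      refine ⟨G', hcf, hind, ?_⟩
      refine Eq.trans (edgeCard_irrel G' _ G'.fintypeEdgeSet) ?_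
      rw [SimpleGraph.edgeFinset_card, SimpleGraph.edgeFinset_card]
      exact Fintype.card_congr φ.mapEdgeSet
    have hbdd : BddAbove {m | ∃ G : SimpleGraph (Fin n), G.CliqueFree 3 ∧
        (∀ t : Finset (Fin n), IsIndep G t → t.card ≤ s) ∧ G.edgeFinset.card = m} := by
      refine ⟨Fintype.card (Sym2 (Fin n)), ?_⟩
      rintro m ⟨G, -, -, rfl⟩
      exact le_trans (Finset.card_le_univ _) (le_of_eq (Finset.card_univ))
    have hle : (canonical 4 n s).edgeFinset.card ≤ exRT n s := le_csSup hbdd hmem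
    have h5' := twoE n s h1 h2 (canonical 4 n s).fintypeEdgeSet
    have hle' : (((canonical 4 n s).edgeFinset.card : ℕ) : ℤ) ≤ (exRT n s : ℤ) := by
      exact_mod_cast hle
    linarith
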